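/- Let U ⊆ ℝⁿ be open and Φ : ℝⁿ → ℝ be three times continuously differentiable on U. Let X, Y : ℝⁿ → ℝⁿ be differentiable vector fields on U such that Hess Φ(x)(X(x), v) = 0 and Hess Φ(x)(Y(x), v) = 0 for all x ∈ U and v ∈ ℝⁿ. Then Hess Φ(x)([X,Y](x), v) = 0 for all x ∈ U and v ∈ ℝⁿ, where [X,Y](x) = (DY(x))(X(x)) − (DX(x))(Y(x)). (Null vector fields of a degenerate Hessian metric are closed under Lie bracket.) -/

import Mathlib

/-- **Null vector fields of a degenerate Hessian metric are closed under Lie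
bracket.** For `Φ` three times continuously differentiable on an open set
`U ⊆ ℝⁿ` and differentiable vector fields `X`, `Y` null for the Hessian metric
`g = Hess Φ` on `U`, the Lie bracket `[X,Y](x) = DY(x)(X(x)) − DX(x)(Y(x))` is
also null for `Hess Φ` on `U`. -/
theorem hessian_null_fields_closed_under_bracket
    (n : ℕ) (U : Set (EuclideanSpace ℝ (Fin n))) (hU : IsOpen U)
    (Φ : EuclideanSpace ℝ (Fin n) → ℝ) (hΦ : ContDiffOn ℝ 3 Φ U)
    (X Y : EuclideanSpace ℝ (Fin n) → EuclideanSpace ℝ (Fin n))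
    (hX : DifferentiableOn ℝ X U) (hY : DifferentiableOn ℝ Y U)
    (hXnull : ∀ x ∈ U, ∀ v, fderiv ℝ (fderiv ℝ Φ) x (X x) v = 0)
    (hYnull : ∀ x ∈ U, ∀ v, fderiv ℝ (fderiv ℝ Φ) x (Y x) v = 0) :
    ∀ x ∈ U, ∀ v,
      fderiv ℝ (fderiv ℝ Φ) x (fderiv ℝ Y x (X x) - fderiv ℝ X x (Y x)) v = 0 := by
  intro x hx v
  have hUx : U ∈ nhds x := hU.mem_nhds hx
  set g := fderiv ℝ (fderiv ℝ Φ) with hgdef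
  -- regularity
  have hΦx : ContDiffAt ℝ 3 Φ x := hΦ.contDiffAt hUx
  have hΦ' : ContDiffAt ℝ 2 (fderiv ℝ Φ) x := hΦx.fderiv_right (by norm_num)
  have hgdiffnhds : ∀ᶠ y in nhds x, DifferentiableAt ℝ g y := by
    have hg1 : ContDiffAt ℝ 1 g x := hΦ'.fderiv_right (by norm_num)
    rcases hg1.contDiffOn le_rfl (by simp) with ⟨s, hs, hgs⟩
    rcases mem_nhds_iff.1 hs with ⟨t, hts, ht, hxt⟩
    filter_upwards [ht.mem_nhds hxt] with y hy
    exact ((hgs.mono hts).differentiableOn one_ne_zero y hy).differentiableAt (ht.mem_nhds hy)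
  have hgx : DifferentiableAt ℝ g x := hgdiffnhds.self_of_nhds
  have hXx : DifferentiableAt ℝ X x := (hX x hx).differentiableAt hUx
  have hYx : DifferentiableAt ℝ Y x := (hY x hx).differentiableAt hUx
  have hX0 : ∀ y ∈ U, g y (X y) = 0 := fun y hy => ContinuousLinearMap.ext (hXnull y hy)
  have hY0 : ∀ y ∈ U, g y (Y y) = 0 := fun y hy => ContinuousLinearMap.ext (hYnull y hy)
  -- the derivative of y ↦ g y (X y) vanishes at x
  have eqX : fderiv ℝ (fun y => g y (X y)) x = 0 := by
    have h : (fun y => g y (X y)) =ᶠ[nhds x]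
        (fun _ => (0 : EuclideanSpace ℝ (Fin n) →L[ℝ] ℝ)) :=
      Filter.eventuallyEq_of_mem hUx hX0
    rw [h.fderiv_eq, fderiv_fun_const]; rfl
  have eqY : fderiv ℝ (fun y => g y (Y y)) x = 0 := by
    have h : (fun y => g y (Y y)) =ᶠ[nhds x]
        (fun _ => (0 : EuclideanSpace ℝ (Fin n) →L[ℝ] ℝ)) :=
      Filter.eventuallyEq_of_mem hUx hY0
    rw [h.fderiv_eq, fderiv_fun_const]; rfl
  have eqX' := fderiv_clm_apply hgx hXx
  have eqY' := fderiv_clm_apply hgx hYx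
  have h1 : fderiv ℝ g x (Y x) (X x) v + g x (fderiv ℝ X x (Y x)) v = 0 := by
    have h := eqX'.symm.trans eqX
    have := congrArg (fun L => L (Y x) v) h
    simpa [add_comm] using this
  have h2 : fderiv ℝ g x (X x) (Y x) v + g x (fderiv ℝ Y x (X x)) v = 0 := by
    have h := eqY'.symm.trans eqY
    have := congrArg (fun L => L (X x) v) h
    simpa [add_comm] using this
  -- symmetry of the third derivative
  have hsymm : fderiv ℝ g x (Y x) (X x) v = fderiv ℝ g x (X x) (Y x) v := by
    have hs : IsSymmSndFDerivAt ℝ (fderiv ℝ Φ) x :=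
      hΦ'.isSymmSndFDerivAt (by simp)
    rw [hgdef]
    rw [hs (Y x) (X x)]
  have := map_sub (g x) (fderiv ℝ Y x (X x)) (fderiv ℝ X x (Y x))
  calc g x (fderiv ℝ Y x (X x) - fderiv ℝ X x (Y x)) v
      = g x (fderiv ℝ Y x (X x)) v - g x (fderiv ℝ X x (Y x)) v := by
        rw [map_sub]; simp
    _ = 0 := by linarith [h1, h2, hsymm]
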